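/- Let f ∈ E₀^lip be ergodic and conservative with respect to Lebesgue measure, and let I be a Markov interval. Then there exist countably many pairwise disjoint subintervals I_j ⊆ I such that the first return map f_I restricted to each I_j is a homeomorphism onto I, and the I_j cover I up to Lebesgue measure zero. -/

import Mathlib

open MeasureTheory Set

/-- Markov interval of order `n` expressed through a lift `F` of a circle map fixing `0`. -/
def MarkovInterval (F : ℝ → ℝ) (n : ℕ) (a b : ℝ) : Prop :=
  a < b ∧ (∀ x ∈ Set.Ioo a b, F^[n] x ∉ Set.range (Int.cast : ℤ → ℝ)) ∧
    F^[n] a ∈ Set.range (Int.cast : ℤ → ℝ) ∧ F^[n] b ∈ Set.range (Int.cast : ℤ → ℝ)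

/-- `F` is a lift of the circle map `f` of degree `d`, with `F 0 = 0`. -/
def IsLiftOf (f : UnitAddCircle → UnitAddCircle) (F : ℝ → ℝ) (d : ℤ) : Prop :=
  (∀ x : ℝ, f (x : UnitAddCircle) = ((F x : ℝ) : UnitAddCircle)) ∧
    (∀ x : ℝ, F (x + 1) = F x + d) ∧ F 0 = 0

/-- `f ∈ E₀^lip`, via its lift: Lipschitz local homeomorphism of the circle fixing `0`
with `λ_f = essinf |f'| > 1`. -/
def MemELip (F : ℝ → ℝ) (lam : ℝ) : Prop :=
  (∃ K : NNReal, LipschitzWith K F) ∧ (StrictMono F ∨ StrictAnti F) ∧ 1 < lam ∧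
    ∀ᵐ x ∂(volume : Measure ℝ), lam ≤ |deriv F x|

open Function

section Aux
variable {F : ℝ → ℝ} {d : ℤ}

lemma shift1 (hF : ∀ x : ℝ, F (x + 1) = F x + d) (t : ℤ) (x : ℝ) :
    F (x + t) = F x + t * d := by
  induction t using Int.induction_on with
  | zero => simp
  | succ k ih =>
      have h := hF (x + (k : ℤ))
      push_cast at h ih ⊢
      rw [show x + ((k : ℝ) + 1) = x + (k : ℝ) + 1 by ring, h, ih]; ring
  | pred k ih =>
      have h := hF (x + (-(k : ℤ) - 1))
      push_cast at h ih ⊢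
      rw [show x + (-(k : ℝ) - 1) = x + (-(k:ℝ) - 1) from rfl] at h
      have h2 : x + (-(k:ℝ) - 1) + 1 = x + -(k:ℝ) := by ring
      rw [h2, ih] at h
      have : F (x + (-(k:ℝ) - 1)) = F x + -(k:ℝ) * d - d := by linarith
      rw [this]; ring

lemma shiftIter (hF : ∀ x : ℝ, F (x + 1) = F x + d) (m : ℕ) (t : ℤ) (x : ℝ) :
    F^[m] (x + t) = F^[m] x + t * d ^ m := by
  induction m with
  | zero => simp
  | succ m ih =>
      rw [Function.iterate_succ_apply', Function.iterate_succ_apply', ih]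
      have h := shift1 hF (t * d ^ m) (F^[m] x)
      push_cast at h
      rw [h]; ring

lemma iterZero (h0 : F 0 = 0) (m : ℕ) : F^[m] 0 = 0 := Function.iterate_fixed h0 m

lemma iterInt (hF : ∀ x : ℝ, F (x + 1) = F x + d) (h0 : F 0 = 0) (m : ℕ) (t : ℤ) :
    F^[m] (t : ℝ) ∈ Set.range (Int.cast : ℤ → ℝ) := by
  have h := shiftIter hF m t 0
  rw [zero_add, iterZero h0, zero_add] at h
  exact ⟨t * d ^ m, by push_cast [h]; ring⟩

/-- points whose `m`-th iterate is an integer. -/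
def Zset (F : ℝ → ℝ) (m : ℕ) : Set ℝ := (F^[m]) ⁻¹' (Set.range (Int.cast : ℤ → ℝ))

lemma Zset_mono (hF : ∀ x : ℝ, F (x + 1) = F x + d) (h0 : F 0 = 0) {m j : ℕ} {x : ℝ}
    (hx : x ∈ Zset F m) : x ∈ Zset F (m + j) := by
  obtain ⟨t, ht⟩ := hx
  have : F^[m + j] x = F^[j] (F^[m] x) := by
    rw [add_comm, Function.iterate_add_apply]
  rw [Zset, mem_preimage, this, ← ht]
  exact iterInt hF h0 j t

lemma Zset_closed (hc : Continuous F) (m : ℕ) : IsClosed (Zset F m) :=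
  Int.isClosedEmbedding_coe_real.isClosed_range.preimage (hc.iterate m)

lemma Zset_countable (hinj : Function.Injective F) (m : ℕ) : (Zset F m).Countable := by
  have : Zset F m = ⋃ t : ℤ, (F^[m]) ⁻¹' {(t : ℝ)} := by
    ext x; simp [Zset, Set.range, eq_comm]
  rw [this]
  refine Set.countable_iUnion fun t => Set.Subsingleton.countable ?_
  intro x hx y hy
  exact hinj.iterate m (hx.trans hy.symm)

lemma iter_mono_or_anti (h : StrictMono F ∨ StrictAnti F) (m : ℕ) :
    StrictMono (F^[m]) ∨ StrictAnti (F^[m]) := by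
  induction m with
  | zero => left; exact fun _ _ h => h
  | succ m ih =>
      rw [Function.iterate_succ']
      rcases h with h | h <;> rcases ih with ih | ih
      · exact Or.inl (h.comp ih)
      · exact Or.inr (h.comp_strictAnti ih)
      · exact Or.inr (h.comp_strictMono ih)
      · exact Or.inl (h.comp ih)

lemma image_Ioo_eq {g : ℝ → ℝ} (hc : Continuous g) (h : StrictMono g ∨ StrictAnti g)
    {u v : ℝ} (huv : u < v) :
    g '' Ioo u v = Ioo (min (g u) (g v)) (max (g u) (g v)) := by
  rcases h with h | h
  · rw [min_eq_left (h huv).le, max_eq_right (h huv).le]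
    apply Subset.antisymm
    · rintro _ ⟨x, hx, rfl⟩; exact ⟨h hx.1, h hx.2⟩
    · exact intermediate_value_Ioo huv.le hc.continuousOn
  · rw [min_eq_right (h huv).le, max_eq_left (h huv).le]
    apply Subset.antisymm
    · rintro _ ⟨x, hx, rfl⟩; exact ⟨h hx.2, h hx.1⟩
    · exact intermediate_value_Ioo' huv.le hc.continuousOn

lemma interval_sub {Z : Set ℝ} {c e c₂ e₂ y : ℝ} (hc₂ : c₂ ∈ Z) (he₂ : e₂ ∈ Z)
    (h1 : ∀ z ∈ Ioo c e, z ∉ Z) (hy : y ∈ Ioo c e) (hy₂ : y ∈ Ioo c₂ e₂) :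
    c₂ ≤ c ∧ e ≤ e₂ := by
  constructor
  · by_contra hlt
    push_neg at hlt
    exact h1 c₂ ⟨hlt, hy₂.1.trans hy.2⟩ hc₂
  · by_contra hlt
    push_neg at hlt
    exact h1 e₂ ⟨hy.1.trans hy₂.2, hlt⟩ he₂

lemma interval_eq {Z : Set ℝ} {c e c₂ e₂ y : ℝ} (hc : c ∈ Z) (he : e ∈ Z)
    (hc₂ : c₂ ∈ Z) (he₂ : e₂ ∈ Z)
    (h1 : ∀ z ∈ Ioo c e, z ∉ Z) (h2 : ∀ z ∈ Ioo c₂ e₂, z ∉ Z)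
    (hy : y ∈ Ioo c e) (hy₂ : y ∈ Ioo c₂ e₂) : c = c₂ ∧ e = e₂ := by
  obtain ⟨ha, hb⟩ := interval_sub hc₂ he₂ h1 hy hy₂
  obtain ⟨ha', hb'⟩ := interval_sub hc he h2 hy₂ hy
  exact ⟨le_antisymm ha' ha, le_antisymm hb hb'⟩

end Aux

section Branch
variable {F : ℝ → ℝ} {d : ℤ}

/-- `b ≤ a + 1` for a Markov interval. -/
lemma markov_len (hF : ∀ x : ℝ, F (x + 1) = F x + d) {n : ℕ} {a b : ℝ}
    (hM : MarkovInterval F n a b) : b ≤ a + 1 := by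
  by_contra hlt
  push_neg at hlt
  obtain ⟨t, ht⟩ := hM.2.2.1
  refine hM.2.1 (a + 1) ⟨by linarith, hlt⟩ ?_
  have h := shiftIter hF n 1 a
  refine ⟨t + d ^ n, ?_⟩
  push_cast
  push_cast at h
  rw [h, ← ht]
  ring

/-- translates of a Markov interval are Markov. -/
lemma markov_shift (hF : ∀ x : ℝ, F (x + 1) = F x + d) (h0 : F 0 = 0) {n : ℕ} {a b : ℝ}
    (hM : MarkovInterval F n a b) (s : ℤ) :
    (a + s) ∈ Zset F n ∧ (b + s) ∈ Zset F n ∧ ∀ z ∈ Ioo (a + (s:ℝ)) (b + s), z ∉ Zset F n := by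
  have key : ∀ x : ℝ, F^[n] (x + s) = F^[n] x + s * d ^ n := fun x => shiftIter hF n s x
  refine ⟨?_, ?_, ?_⟩
  · obtain ⟨t, ht⟩ := hM.2.2.1
    exact ⟨t + s * d ^ n, by push_cast [key a, ← ht]; ring⟩
  · obtain ⟨t, ht⟩ := hM.2.2.2
    exact ⟨t + s * d ^ n, by push_cast [key b, ← ht]; ring⟩
  · rintro z ⟨h1, h2⟩ ⟨t, ht⟩
    refine hM.2.1 (z - s) ⟨by linarith, by linarith⟩ ⟨t - s * d ^ n, ?_⟩
    have := key (z - s)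
    rw [show z - (s:ℝ) + (s:ℝ) = z by ring] at this
    push_cast
    push_cast at ht
    linarith [this]

lemma branch_exists (hF : ∀ x : ℝ, F (x + 1) = F x + d) (h0 : F 0 = 0)
    (hc : Continuous F) (hmono : StrictMono F ∨ StrictAnti F)
    {n : ℕ} {a b : ℝ} (hM : MarkovInterval F n a b) (k : ℕ) (hk : 1 ≤ k) (x : ℝ)
    (hx : x ∈ Ioo a b)
    (hgood : ∀ m : ℕ, x ∉ Zset F m)
    (hret : ∃ t : ℤ, F^[k] x ∈ Ioo (a + (t:ℝ)) (b + t))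
    (hmin : ∀ j : ℕ, 1 ≤ j → j < k → ∀ s : ℤ, F^[j] x ∉ Ioo (a + (s:ℝ)) (b + s)) :
    ∃ a' b', a ≤ a' ∧ b' ≤ b ∧ x ∈ Ioo a' b' ∧ MarkovInterval F (n + k) a' b' ∧
      (∃ t : ℤ, F^[k] '' Ioo a' b' = Ioo (a + (t:ℝ)) (b + t)) ∧
      (∀ y ∈ Ioo a' b', ∀ j : ℕ, 1 ≤ j → j < k → ∀ s : ℤ,
        F^[j] y ∉ Ioo (a + (s:ℝ)) (b + s)) := by
  set Z := Zset F (n + k) with hZ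
  have hZc : IsClosed Z := Zset_closed hc (n + k)
  have haZ : a ∈ Z := Zset_mono hF h0 hM.2.2.1
  have hbZ : b ∈ Z := Zset_mono hF h0 hM.2.2.2
  have hxZ : x ∉ Z := hgood (n + k)
  -- left endpoint
  set A := Z ∩ Icc a x with hA
  have hAc : IsCompact A := (isCompact_Icc).inter_left hZc
  have hAne : A.Nonempty := ⟨a, haZ, le_refl a, hx.1.le⟩
  set a' := sSup A with ha'
  have ha'A : a' ∈ A := hAc.sSup_mem hAne
  have ha'lt : a' < x := lt_of_le_of_ne ha'A.2.2 (fun h => hxZ (h ▸ ha'A.1))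
  have haa' : a ≤ a' := ha'A.2.1
  -- right endpoint
  set B := Z ∩ Icc x b with hB
  have hBc : IsCompact B := (isCompact_Icc).inter_left hZc
  have hBne : B.Nonempty := ⟨b, hbZ, hx.2.le, le_refl b⟩
  set b' := sInf B with hb'
  have hb'B : b' ∈ B := hBc.sInf_mem hBne
  have hb'gt : x < b' := lt_of_le_of_ne hb'B.2.1 (fun h => hxZ (h ▸ hb'B.1))
  have hb'b : b' ≤ b := hb'B.2.2
  have hxab : x ∈ Ioo a' b' := ⟨ha'lt, hb'gt⟩
  -- interior avoids Z
  have hint : ∀ z ∈ Ioo a' b', z ∉ Z := by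
    rintro z ⟨h1, h2⟩ hzZ
    rcases le_or_gt z x with h | h
    · exact absurd (le_csSup hAc.bddAbove (show z ∈ A from ⟨hzZ, haa'.trans h1.le, h⟩)) (not_le.mpr h1)
    · exact absurd (csInf_le hBc.bddBelow (show z ∈ B from ⟨hzZ, h.le, h2.le.trans hb'b⟩))
        (not_le.mpr h2)
  have hMk : MarkovInterval F (n + k) a' b' :=
    ⟨ha'lt.trans hb'gt, fun z hz ht => hint z hz ht, ha'A.1, hb'B.1⟩
  -- the image interval
  obtain ⟨t, htmem⟩ := hret
  have hck : Continuous (F^[k]) := hc.iterate k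
  have himg : F^[k] '' Ioo a' b' =
      Ioo (min (F^[k] a') (F^[k] b')) (max (F^[k] a') (F^[k] b')) :=
    image_Ioo_eq hck (iter_mono_or_anti hmono k) hMk.1
  set c := min (F^[k] a') (F^[k] b') with hcdef
  set e := max (F^[k] a') (F^[k] b') with hedef
  -- endpoints of the image lie in `Zset F n`
  have hendZ : ∀ w ∈ ({a', b'} : Set ℝ), F^[k] w ∈ Zset F n := by
    rintro w hw
    have hwZ : w ∈ Z := by rcases hw with rfl | rfl; exacts [ha'A.1, hb'B.1]
    obtain ⟨s, hs⟩ := hwZ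
    exact ⟨s, by rw [hs, Function.iterate_add_apply]⟩
  have hcZ : c ∈ Zset F n := by
    rcases min_choice (F^[k] a') (F^[k] b') with h | h <;> rw [hcdef, h]
    · exact hendZ a' (by simp)
    · exact hendZ b' (by simp)
  have heZ : e ∈ Zset F n := by
    rcases max_choice (F^[k] a') (F^[k] b') with h | h <;> rw [hedef, h]
    · exact hendZ a' (by simp)
    · exact hendZ b' (by simp)
  -- interior of the image avoids `Zset F n`
  have himgint : ∀ z ∈ Ioo c e, z ∉ Zset F n := by
    intro z hz hzZ
    rw [← himg] at hz
    obtain ⟨w, hw, rfl⟩ := hz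
    obtain ⟨s, hs⟩ := hzZ
    refine hMk.2.1 w hw ⟨s, ?_⟩
    rw [Function.iterate_add_apply]
    exact hs
  -- the translate (a+t, b+t)
  obtain ⟨hatZ, hbtZ, hshiftint⟩ := markov_shift hF h0 hM t
  have hxin : F^[k] x ∈ Ioo c e := by
    rw [← himg]; exact ⟨x, hxab, rfl⟩
  obtain ⟨hc1, hc2⟩ := interval_eq hcZ heZ hatZ hbtZ himgint hshiftint hxin htmem
  refine ⟨a', b', haa', hb'b, hxab, hMk, ⟨t, by rw [himg, hc1, hc2]⟩, ?_⟩
  -- first return time is constant on the branch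
  intro y hy j hj1 hjk s hmem
  -- image of branch under F^[j]
  have himgj : F^[j] '' Ioo a' b' =
      Ioo (min (F^[j] a') (F^[j] b')) (max (F^[j] a') (F^[j] b')) :=
    image_Ioo_eq (hc.iterate j) (iter_mono_or_anti hmono j) hMk.1
  set cj := min (F^[j] a') (F^[j] b') with hcj
  set ej := max (F^[j] a') (F^[j] b') with hej
  have hjint : ∀ z ∈ Ioo cj ej, z ∉ Zset F n := by
    intro z hz hzZ
    rw [← himgj] at hz
    obtain ⟨w, hw, rfl⟩ := hz
    obtain ⟨s', hs'⟩ := hzZ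
    -- F^[n+j] w ∈ ℤ  ⇒  F^[n+k] w ∈ ℤ
    have h1 : F^[j] w ∈ Zset F n := ⟨s', hs'⟩
    have h2 : F^[j] w ∈ Zset F (n + (k - j)) := Zset_mono hF h0 h1
    refine hMk.2.1 w hw ?_
    have heq : F^[n + k] w = F^[n + (k - j)] (F^[j] w) := by
      rw [← Function.iterate_add_apply]
      congr 1
      omega
    rw [heq]
    exact h2
  obtain ⟨hasZ, hbsZ, -⟩ := markov_shift hF h0 hM s
  have hyj : F^[j] y ∈ Ioo cj ej := by rw [← himgj]; exact ⟨y, hy, rfl⟩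
  obtain ⟨hs1, hs2⟩ := interval_sub hasZ hbsZ hjint hyj hmem
  have hxj : F^[j] x ∈ Ioo cj ej := by rw [← himgj]; exact ⟨x, hxab, rfl⟩
  exact hmin j hj1 hjk s ⟨hs1.trans_lt hxj.1, hxj.2.trans_le hs2⟩

end Branch

instance : NullSingletonClass (volume : Measure UnitAddCircle) := by
  constructor
  intro x
  have h := AddCircle.volume_closedBall (T := 1) (x := x) 0
  simpa using h

/-- **Full branches of the first return map.**
Let `f ∈ E₀^lip` be ergodic and conservative with respect to Lebesgue measure, and let
`I` be a Markov interval.  Then there is a countable family of pairwise disjoint open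
subintervals `J ⊆ I` such that on each `J` the first return map `f_I` coincides with an
iterate `f^[k]` (the constant first return time on `J`) mapping `J` bijectively onto
`I`, and these subintervals cover `I` up to Lebesgue measure zero. -/
theorem return_map_full_branches
    (f : UnitAddCircle → UnitAddCircle) (F : ℝ → ℝ) (d : ℤ) (lam : ℝ)
    (hlift : IsLiftOf f F d) (hlip : MemELip F lam) (hmeas : Measurable f)
    (herg : ∀ X : Set UnitAddCircle, MeasurableSet X → f ⁻¹' X = X →
      volume X = 0 ∨ volume X = 1)
    (hcons : ∀ X : Set UnitAddCircle, MeasurableSet X →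
      X ∩ (⋃ k : ℕ, ⋃ _ : 1 ≤ k, f^[k] ⁻¹' X) = ∅ → volume X = 0)
    (n : ℕ) (a b : ℝ) (hM : MarkovInterval F n a b)
    (I : Set UnitAddCircle) (hI : I = (fun x : ℝ => (x : UnitAddCircle)) '' Set.Ioo a b) :
    ∃ 𝓙 : Set (Set UnitAddCircle), 𝓙.Countable ∧
      (∀ J ∈ 𝓙, J ⊆ I ∧
        (∃ a' b' : ℝ, a' < b' ∧ J = (fun x : ℝ => (x : UnitAddCircle)) '' Set.Ioo a' b') ∧
        ∃ k : ℕ, 1 ≤ k ∧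
          (∀ x ∈ J, f^[k] x ∈ I ∧ ∀ j : ℕ, 1 ≤ j → j < k → f^[j] x ∉ I) ∧
          Set.BijOn (f^[k]) J I) ∧
      (𝓙.Pairwise Disjoint) ∧
      volume (I \ ⋃₀ 𝓙) = 0 := by
  classical
  obtain ⟨hlf, hFs, hF0⟩ := hlift
  obtain ⟨⟨K, hK⟩, hmono, -, -⟩ := hlip
  have hc : Continuous F := hK.continuous
  have hinj : Function.Injective F := by
    rcases hmono with h | h
    exacts [h.injective, h.injective]
  -- the projection
  set π : ℝ → UnitAddCircle := fun x : ℝ => (x : UnitAddCircle) with hπ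
  have hcomm : ∀ (k : ℕ) (x : ℝ), f^[k] (π x) = π (F^[k] x) := by
    intro k
    induction k with
    | zero => intro x; simp
    | succ k ih =>
        intro x
        have h1 : f^[k+1] (π x) = f^[k] (π (F x)) := by
          rw [Function.iterate_succ_apply]
          exact congrArg _ (hlf x)
        rw [h1, ih (F x), ← Function.iterate_succ_apply]
  have hcoe : ∀ x y : ℝ, (π x = π y) ↔ ∃ s : ℤ, y = x + s := by
    intro x y
    rw [show (π x = π y) ↔ -x + y ∈ AddSubgroup.zmultiples (1:ℝ) from QuotientAddGroup.eq]
    constructor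
    · rintro ⟨s, hs⟩
      refine ⟨s, ?_⟩
      simp only [zsmul_eq_mul, mul_one] at hs
      linarith
    · rintro ⟨s, rfl⟩
      exact ⟨s, by simp [zsmul_eq_mul]⟩
  have hπs : ∀ (x : ℝ) (s : ℤ), π (x + s) = π x := fun x s =>
    ((hcoe x (x + s)).mpr ⟨s, rfl⟩).symm
  have hlen : b ≤ a + 1 := markov_len hFs hM
  -- injectivity of π on intervals of length ≤ 1
  have hInt : ∀ u v w₁ w₂ : ℝ, v ≤ u + 1 → w₁ ∈ Ioo u v → w₂ ∈ Ioo u v →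
      π w₁ = π w₂ → w₁ = w₂ := by
    intro u v w₁ w₂ huv h1 h2 heq
    obtain ⟨s, hs⟩ := (hcoe w₁ w₂).mp heq
    have hs1 : (s : ℝ) < 1 := by
      have := h1.1; have := h2.2; linarith
    have hs2 : (-1 : ℝ) < s := by
      have := h1.2; have := h2.1; linarith
    have : s = 0 := by
      have l1 : s < 1 := by exact_mod_cast hs1
      have l2 : -1 < s := by exact_mod_cast hs2
      omega
    rw [hs, this]; simp
  -- the branch parameter set
  set P : Set (ℕ × ℝ × ℝ) := {p | 1 ≤ p.1 ∧ a ≤ p.2.1 ∧ p.2.2 ≤ b ∧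
    MarkovInterval F (n + p.1) p.2.1 p.2.2 ∧
    (∃ t : ℤ, F^[p.1] '' Ioo p.2.1 p.2.2 = Ioo (a + (t:ℝ)) (b + t)) ∧
    ∀ y ∈ Ioo p.2.1 p.2.2, ∀ j : ℕ, 1 ≤ j → j < p.1 → ∀ s : ℤ,
      F^[j] y ∉ Ioo (a + (s:ℝ)) (b + s)} with hP
  refine ⟨(fun p : ℕ × ℝ × ℝ => π '' Ioo p.2.1 p.2.2) '' P, ?_, ?_, ?_, ?_⟩
  · -- countability
    refine Set.Countable.image ?_ _
    have hsub : P ⊆ ⋃ k : ℕ, {k} ×ˢ ((Zset F (n + k) ∩ Icc a b) ×ˢ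
        (Zset F (n + k) ∩ Icc a b)) := by
      rintro ⟨k, a', b'⟩ ⟨hk1, haa', hb'b, hMk, -, -⟩
      refine mem_iUnion.mpr ⟨k, rfl, ⟨hMk.2.2.1, haa', (hMk.1.le.trans hb'b)⟩,
        ⟨hMk.2.2.2, haa'.trans hMk.1.le, hb'b⟩⟩
    refine Set.Countable.mono hsub (Set.countable_iUnion fun k => ?_)
    have hZc : (Zset F (n + k) ∩ Icc a b).Countable :=
      (Zset_countable hinj (n + k)).mono inter_subset_left
    exact (Set.countable_singleton k).prod (hZc.prod hZc)
  · -- branch properties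
    rintro J ⟨⟨k, a', b'⟩, ⟨hk1, haa', hb'b, hMk, ⟨t, himg⟩, hfr⟩, rfl⟩
    simp only at himg hfr hMk haa' hb'b hk1 ⊢
    have hsub : Ioo a' b' ⊆ Ioo a b := fun y hy =>
      ⟨haa'.trans_lt hy.1, hy.2.trans_le hb'b⟩
    have hmemt : ∀ y ∈ Ioo a' b', F^[k] y ∈ Ioo (a + (t:ℝ)) (b + t) := by
      intro y hy
      rw [← himg]; exact ⟨y, hy, rfl⟩
    constructor
    · rw [hI]; exact image_mono hsub
    refine ⟨⟨a', b', hMk.1, rfl⟩, k, hk1, ?_, ?_, ?_, ?_⟩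
    · -- return time properties
      rintro x ⟨y, hy, rfl⟩
      constructor
      · rw [hcomm k y, hI]
        refine ⟨F^[k] y - t, ⟨?_, ?_⟩, ?_⟩
        · have := (hmemt y hy).1; linarith
        · have := (hmemt y hy).2; linarith
        · have h := hπs (F^[k] y - t) t
          rw [show F^[k] y - (t:ℝ) + t = F^[k] y by ring] at h
          exact h.symm
      · intro j hj1 hjk hmem
        rw [hcomm j y, hI] at hmem
        obtain ⟨w, hw, hweq⟩ := hmem
        obtain ⟨s, hs⟩ := (hcoe w (F^[j] y)).mp hweq
        exact hfr y hy j hj1 hjk s ⟨by rw [hs]; exact by linarith [hw.1],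
          by rw [hs]; exact by linarith [hw.2]⟩
    · -- MapsTo
      rintro x ⟨y, hy, rfl⟩
      rw [hcomm k y, hI]
      refine ⟨F^[k] y - t, ⟨?_, ?_⟩, ?_⟩
      · have := (hmemt y hy).1; linarith
      · have := (hmemt y hy).2; linarith
      · have h := hπs (F^[k] y - t) t
        rw [show F^[k] y - (t:ℝ) + t = F^[k] y by ring] at h
        exact h.symm
    · -- InjOn
      rintro x₁ ⟨y₁, hy₁, rfl⟩ x₂ ⟨y₂, hy₂, rfl⟩ heq
      rw [hcomm k y₁, hcomm k y₂] at heq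
      have := hInt (a + t) (b + t) (F^[k] y₁) (F^[k] y₂) (by linarith)
        (hmemt y₁ hy₁) (hmemt y₂ hy₂) heq
      have hy := (hinj.iterate k) this
      rw [hy]
    · -- SurjOn
      rw [hI]
      rintro x ⟨w, hw, rfl⟩
      have : w + t ∈ F^[k] '' Ioo a' b' := by
        rw [himg]; exact ⟨by linarith [hw.1], by linarith [hw.2]⟩
      obtain ⟨y, hy, hyw⟩ := this
      exact ⟨π y, ⟨y, hy, rfl⟩, by rw [hcomm k y, hyw]; exact hπs w t⟩
  · -- pairwise disjoint
    have key : ∀ k₁ a₁ b₁ k₂ a₂ b₂, (k₁, a₁, b₁) ∈ P → (k₂, a₂, b₂) ∈ P →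
        k₁ < k₂ → ∀ y : ℝ, y ∈ Ioo a₁ b₁ → y ∈ Ioo a₂ b₂ → False := by
      rintro k₁ a₁ b₁ k₂ a₂ b₂ ⟨hk1, -, -, -, ⟨t, himg⟩, -⟩
        ⟨-, -, -, -, -, hfr⟩ hlt y hy1 hy2
      simp only at himg hfr
      have : F^[k₁] y ∈ Ioo (a + (t:ℝ)) (b + t) := by
        rw [← himg]; exact ⟨y, hy1, rfl⟩
      exact hfr y hy2 k₁ hk1 hlt t this
    rintro J₁ ⟨⟨k₁, a₁, b₁⟩, hp₁, rfl⟩ J₂ ⟨⟨k₂, a₂, b₂⟩, hp₂, rfl⟩ hne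
    rw [Set.disjoint_left]
    rintro z ⟨y₁, hy₁, rfl⟩ ⟨y₂, hy₂, heq⟩
    simp only at hy₁ hy₂ heq hne ⊢
    obtain ⟨-, ha₁, hb₁, hM₁, -, -⟩ := id hp₁
    obtain ⟨-, ha₂, hb₂, hM₂, -, -⟩ := id hp₂
    have hsub₁ : Ioo a₁ b₁ ⊆ Ioo a b := fun w hw => ⟨ha₁.trans_lt hw.1, hw.2.trans_le hb₁⟩
    have hsub₂ : Ioo a₂ b₂ ⊆ Ioo a b := fun w hw => ⟨ha₂.trans_lt hw.1, hw.2.trans_le hb₂⟩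
    have hyy : y₂ = y₁ := hInt a b y₂ y₁ hlen (hsub₂ hy₂) (hsub₁ hy₁) heq
    subst hyy
    rcases lt_trichotomy k₁ k₂ with h | h | h
    · exact key k₁ a₁ b₁ k₂ a₂ b₂ hp₁ hp₂ h y₂ hy₁ hy₂
    · -- same return time: branches coincide
      subst h
      have h1 : ∀ z ∈ Ioo a₁ b₁, z ∉ Zset F (n + k₁) := fun z hz => hM₁.2.1 z hz
      have h2 : ∀ z ∈ Ioo a₂ b₂, z ∉ Zset F (n + k₁) := fun z hz => hM₂.2.1 z hz
      have za1 : a₁ ∈ Zset F (n + k₁) := hM₁.2.2.1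
      have zb1 : b₁ ∈ Zset F (n + k₁) := hM₁.2.2.2
      have za2 : a₂ ∈ Zset F (n + k₁) := hM₂.2.2.1
      have zb2 : b₂ ∈ Zset F (n + k₁) := hM₂.2.2.2
      obtain ⟨hae, hbe⟩ := interval_eq za1 zb1 za2 zb2 h1 h2 hy₁ hy₂
      exact hne (by rw [hae, hbe])
    · exact key k₂ a₂ b₂ k₁ a₁ b₁ hp₂ hp₁ h y₂ hy₂ hy₁
  · -- measure zero complement
    set Bad : Set UnitAddCircle := π '' (⋃ m : ℕ, Zset F m) with hBad
    set N : Set UnitAddCircle := I ∩ ⋂ k : ℕ, ⋂ _ : 1 ≤ k, (f^[k] ⁻¹' I)ᶜ with hN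
    have hIopen : IsOpen I := by
      rw [hI]
      exact QuotientAddGroup.isOpenMap_coe _ isOpen_Ioo
    have hNmeas : MeasurableSet N := by
      refine hIopen.measurableSet.inter (MeasurableSet.iInter fun k =>
        MeasurableSet.iInter fun _ => ((hmeas.iterate k) hIopen.measurableSet).compl)
    have hNnull : volume N = 0 := by
      refine hcons N hNmeas ?_
      ext x
      simp only [mem_inter_iff, mem_iUnion, mem_empty_iff_false, iff_false, not_and]
      rintro ⟨hxI, hxN⟩ ⟨k, hk1, hxk⟩
      have := hxN
      simp only [hN, mem_iInter, mem_compl_iff, mem_preimage] at this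
      exact this k hk1 (hxk.1)
    have hBadnull : volume Bad = 0 := by
      refine Set.Countable.measure_zero ?_ _
      exact Set.Countable.image (Set.countable_iUnion fun m => Zset_countable hinj m) _
    refine measure_mono_null ?_ (measure_union_null hBadnull hNnull)
    rintro x ⟨hxI, hxJ⟩
    by_cases hxBad : x ∈ Bad
    · exact Or.inl hxBad
    right
    refine ⟨hxI, ?_⟩
    simp only [hN, mem_iInter, mem_compl_iff, mem_preimage]
    intro k hk1 hfk
    -- x returns; construct the branch containing x, contradiction with x ∉ ⋃₀ 𝓙
    exfalso
    apply hxJ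
    rw [hI] at hxI
    obtain ⟨x0, hx0, rfl⟩ := hxI
    have hgood : ∀ m : ℕ, x0 ∉ Zset F m := by
      intro m hm
      exact hxBad ⟨x0, mem_iUnion.mpr ⟨m, hm⟩, rfl⟩
    have hQ : ∃ k : ℕ, 1 ≤ k ∧ f^[k] (π x0) ∈ I := ⟨k, hk1, hfk⟩
    set k₀ := Nat.find hQ with hk₀
    obtain ⟨hk₀1, hk₀I⟩ := Nat.find_spec hQ
    have hret : ∃ t : ℤ, F^[k₀] x0 ∈ Ioo (a + (t:ℝ)) (b + t) := by
      rw [hcomm k₀ x0, hI] at hk₀I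
      obtain ⟨w, hw, hweq⟩ := hk₀I
      obtain ⟨s, hs⟩ := (hcoe w (F^[k₀] x0)).mp hweq
      exact ⟨s, by rw [hs]; exact ⟨by linarith [hw.1], by linarith [hw.2]⟩⟩
    have hmin : ∀ j : ℕ, 1 ≤ j → j < k₀ → ∀ s : ℤ,
        F^[j] x0 ∉ Ioo (a + (s:ℝ)) (b + s) := by
      intro j hj1 hjk s hmem
      refine Nat.find_min hQ hjk ⟨hj1, ?_⟩
      rw [hcomm j x0, hI]
      refine ⟨F^[j] x0 - s, ⟨by linarith [hmem.1], by linarith [hmem.2]⟩, ?_⟩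
      have h := hπs (F^[j] x0 - s) s
      rw [show F^[j] x0 - (s:ℝ) + s = F^[j] x0 by ring] at h
      exact h.symm
    obtain ⟨a', b', haa', hb'b, hxab, hMk, himg, hfr⟩ :=
      branch_exists hFs hF0 hc hmono hM k₀ hk₀1 x0 hx0 hgood hret hmin
    exact ⟨π '' Ioo a' b', ⟨(k₀, a', b'), ⟨hk₀1, haa', hb'b, hMk, himg, hfr⟩, rfl⟩,
      ⟨x0, hxab, rfl⟩⟩
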